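/- (Single-node backlog tail bound) Let A be a stationary arrival process and S a service process at one node with D(t) ≥ (A ⊗ S)(t) pathwise. Then for all t ≥ 0, x ≥ 0 and θ > 0: P(A(t) - D(t) > x) ≤ [Σ_{u=0}^{t} E[e^{θ A(u)}]^{1/2} E[e^{-θ S(u)}]^{1/2}] · e^{-θx/2}. -/

import Mathlib

open MeasureTheory ProbabilityTheory

lemma cs_aux {Ω : Type*} [MeasurableSpace Ω] (μ : Measure Ω) {f g : Ω → ℝ}
    (hfm : Measurable f) (hgm : Measurable g)
    (hf0 : ∀ ω, 0 ≤ f ω) (hg0 : ∀ ω, 0 ≤ g ω)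
    (hf2 : Integrable (fun ω => f ω ^ 2) μ) (hg2 : Integrable (fun ω => g ω ^ 2) μ) :
    Integrable (fun ω => f ω * g ω) μ ∧
      ∫ ω, f ω * g ω ∂μ ≤
        (∫ ω, f ω ^ 2 ∂μ) ^ ((1 : ℝ) / 2) * (∫ ω, g ω ^ 2 ∂μ) ^ ((1 : ℝ) / 2) := by
  have hpq : Real.HolderConjugate 2 2 := Real.holderConjugate_iff.mpr ⟨one_lt_two, by norm_num⟩
  set F : Ω → ENNReal := fun ω => ENNReal.ofReal (f ω) with hF
  set G : Ω → ENNReal := fun ω => ENNReal.ofReal (g ω) with hG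
  have hFrp : ∀ ω, F ω ^ (2 : ℝ) = ENNReal.ofReal (f ω ^ 2) := by
    intro ω
    rw [ENNReal.ofReal_rpow_of_nonneg (hf0 ω) (by norm_num)]
    norm_num [Real.rpow_natCast]
  have hGrp : ∀ ω, G ω ^ (2 : ℝ) = ENNReal.ofReal (g ω ^ 2) := by
    intro ω
    rw [ENNReal.ofReal_rpow_of_nonneg (hg0 ω) (by norm_num)]
    norm_num [Real.rpow_natCast]
  have hFint : ∫⁻ ω, F ω ^ (2 : ℝ) ∂μ = ENNReal.ofReal (∫ ω, f ω ^ 2 ∂μ) := by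
    simp_rw [hFrp]
    exact (ofReal_integral_eq_lintegral_ofReal hf2
      (Filter.Eventually.of_forall fun ω => sq_nonneg _)).symm
  have hGint : ∫⁻ ω, G ω ^ (2 : ℝ) ∂μ = ENNReal.ofReal (∫ ω, g ω ^ 2 ∂μ) := by
    simp_rw [hGrp]
    exact (ofReal_integral_eq_lintegral_ofReal hg2
      (Filter.Eventually.of_forall fun ω => sq_nonneg _)).symm
  have hH := ENNReal.lintegral_mul_le_Lp_mul_Lq μ hpq
    (hfm.ennreal_ofReal.aemeasurable) (hgm.ennreal_ofReal.aemeasurable)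
  rw [hFint, hGint] at hH
  have hmul : ∀ ω, (F * G) ω = ENNReal.ofReal (f ω * g ω) := fun ω =>
    (ENNReal.ofReal_mul (hf0 ω)).symm
  simp_rw [← hF, ← hG, hmul] at hH
  have hfin : ∫⁻ ω, ENNReal.ofReal (f ω * g ω) ∂μ < ⊤ :=
    lt_of_le_of_lt hH (by
      exact ENNReal.mul_lt_top (ENNReal.rpow_lt_top_of_nonneg (by norm_num)
        ENNReal.ofReal_ne_top) (ENNReal.rpow_lt_top_of_nonneg (by norm_num)
        ENNReal.ofReal_ne_top))
  have hnn : 0 ≤ᵐ[μ] fun ω => f ω * g ω :=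
    Filter.Eventually.of_forall fun ω => mul_nonneg (hf0 ω) (hg0 ω)
  have hint : Integrable (fun ω => f ω * g ω) μ :=
    ⟨(hfm.mul hgm).aestronglyMeasurable, (hasFiniteIntegral_iff_ofReal hnn).2 hfin⟩
  refine ⟨hint, ?_⟩
  have h1 : ENNReal.ofReal (∫ ω, f ω * g ω ∂μ) = ∫⁻ ω, ENNReal.ofReal (f ω * g ω) ∂μ :=
    ofReal_integral_eq_lintegral_ofReal hint hnn
  have h2 : ENNReal.ofReal (∫ ω, f ω * g ω ∂μ) ≤
      ENNReal.ofReal (∫ ω, f ω ^ 2 ∂μ) ^ ((1:ℝ)/2) * ENNReal.ofReal (∫ ω, g ω ^ 2 ∂μ) ^ ((1:ℝ)/2) := by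
    rw [h1]; exact hH
  have hI1 : (0:ℝ) ≤ ∫ ω, f ω ^ 2 ∂μ := integral_nonneg fun ω => sq_nonneg _
  have hI2 : (0:ℝ) ≤ ∫ ω, g ω ^ 2 ∂μ := integral_nonneg fun ω => sq_nonneg _
  have := ENNReal.toReal_mono (by
      exact ENNReal.mul_ne_top (ENNReal.rpow_ne_top_of_nonneg (by norm_num)
        ENNReal.ofReal_ne_top) (ENNReal.rpow_ne_top_of_nonneg (by norm_num)
        ENNReal.ofReal_ne_top)) h2
  rwa [ENNReal.toReal_ofReal (integral_nonneg fun ω => mul_nonneg (hf0 ω) (hg0 ω)),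
    ENNReal.toReal_mul, ← ENNReal.toReal_rpow, ← ENNReal.toReal_rpow,
    ENNReal.toReal_ofReal hI1, ENNReal.toReal_ofReal hI2] at this

lemma key_bound {Ω : Type*} [MeasurableSpace Ω]
    (μ : Measure Ω) [IsProbabilityMeasure μ]
    (A : ℕ → Ω → ℝ) (S : ℕ → ℕ → Ω → ℝ)
    (hAmeas : ∀ u, Measurable (A u)) (hSmeas : ∀ s t, Measurable (S s t))
    (hAstat : ∀ s t : ℕ, s ≤ t →
      IdentDistrib (fun ω => A t ω - A s ω) (A (t - s)) μ μ)
    (hSstat : ∀ s t : ℕ, s ≤ t → IdentDistrib (S s t) (S 0 (t - s)) μ μ)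
    (hintA : ∀ (θ : ℝ) (u : ℕ), Integrable (fun ω => Real.exp (θ * A u ω)) μ)
    (hintS : ∀ (θ : ℝ) (s t : ℕ), Integrable (fun ω => Real.exp (θ * S s t ω)) μ)
    (x θ : ℝ) (hθ : 0 < θ) (s t : ℕ) (hst : s ≤ t) :
    μ {ω | x < A t ω - A s ω - S s t ω} ≤
      ENNReal.ofReal
        (((∫ ω, Real.exp (θ * A (t - s) ω) ∂μ) ^ ((1 : ℝ) / 2) *
          (∫ ω, Real.exp (-θ * S 0 (t - s) ω) ∂μ) ^ ((1 : ℝ) / 2)) *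
          Real.exp (-θ * x / 2)) := by
  have hc : (0:ℝ) < θ / 2 := by positivity
  set f : Ω → ℝ := fun ω => Real.exp (θ / 2 * (A t ω - A s ω)) with hfdef
  set g : Ω → ℝ := fun ω => Real.exp (-(θ / 2) * S s t ω) with hgdef
  have hfm : Measurable f := Real.measurable_exp.comp
    (measurable_const.mul ((hAmeas t).sub (hAmeas s)))
  have hgm : Measurable g := Real.measurable_exp.comp
    (measurable_const.mul (hSmeas s t))
  -- identities for squares
  have hfsq : (fun ω => f ω ^ 2) = fun ω => Real.exp (θ * (A t ω - A s ω)) := by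
    funext ω
    rw [sq, ← Real.exp_add]
    congr 1; ring
  have hgsq : (fun ω => g ω ^ 2) = fun ω => Real.exp (-θ * S s t ω) := by
    funext ω
    rw [sq, ← Real.exp_add]
    congr 1; ring
  -- identdistrib transfers
  have idA : IdentDistrib (fun ω => Real.exp (θ * (A t ω - A s ω)))
      (fun ω => Real.exp (θ * A (t - s) ω)) μ μ :=
    (hAstat s t hst).comp (Real.measurable_exp.comp (measurable_const_mul θ))
  have idS : IdentDistrib (fun ω => Real.exp (-θ * S s t ω))
      (fun ω => Real.exp (-θ * S 0 (t - s) ω)) μ μ :=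
    (hSstat s t hst).comp (Real.measurable_exp.comp (measurable_const_mul (-θ)))
  have hf2 : Integrable (fun ω => f ω ^ 2) μ := by
    rw [hfsq]; exact idA.integrable_iff.mpr (hintA θ (t - s))
  have hg2 : Integrable (fun ω => g ω ^ 2) μ := by
    rw [hgsq]; exact hintS (-θ) s t
  obtain ⟨hint, hCS⟩ := cs_aux μ hfm hgm (fun ω => (Real.exp_pos _).le)
    (fun ω => (Real.exp_pos _).le) hf2 hg2
  -- Chernoff
  have hprod : (fun ω => Real.exp (θ / 2 * (A t ω - A s ω - S s t ω))) =
      fun ω => f ω * g ω := by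
    funext ω
    rw [hfdef, hgdef, ← Real.exp_add]
    congr 1; ring
  have hint' : Integrable (fun ω => Real.exp (θ / 2 * (A t ω - A s ω - S s t ω))) μ := by
    rw [hprod]; exact hint
  have hch := measure_ge_le_exp_mul_mgf (X := fun ω => A t ω - A s ω - S s t ω)
    (μ := μ) (t := θ / 2) x hc.le hint'
  rw [mgf] at hch
  rw [show (μ[fun ω => Real.exp (θ / 2 * (A t ω - A s ω - S s t ω))]) =
    ∫ ω, f ω * g ω ∂μ from by rw [← hprod]] at hch
  have hI1 : ∫ ω, f ω ^ 2 ∂μ = ∫ ω, Real.exp (θ * A (t - s) ω) ∂μ := by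
    rw [hfsq]; exact idA.integral_eq
  have hI2 : ∫ ω, g ω ^ 2 ∂μ = ∫ ω, Real.exp (-θ * S 0 (t - s) ω) ∂μ := by
    rw [hgsq]; exact idS.integral_eq
  rw [hI1, hI2] at hCS
  have hJ1 : (0:ℝ) ≤ ∫ ω, Real.exp (θ * A (t - s) ω) ∂μ :=
    integral_nonneg fun ω => (Real.exp_pos _).le
  have hJ2 : (0:ℝ) ≤ ∫ ω, Real.exp (-θ * S 0 (t - s) ω) ∂μ :=
    integral_nonneg fun ω => (Real.exp_pos _).le
  have htarget : (μ {ω | x ≤ A t ω - A s ω - S s t ω}).toReal ≤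
      ((∫ ω, Real.exp (θ * A (t - s) ω) ∂μ) ^ ((1 : ℝ) / 2) *
        (∫ ω, Real.exp (-θ * S 0 (t - s) ω) ∂μ) ^ ((1 : ℝ) / 2)) *
        Real.exp (-θ * x / 2) := by
    calc (μ {ω | x ≤ A t ω - A s ω - S s t ω}).toReal
        ≤ Real.exp (-(θ / 2) * x) * ∫ ω, f ω * g ω ∂μ := hch
      _ ≤ Real.exp (-(θ / 2) * x) *
          ((∫ ω, Real.exp (θ * A (t - s) ω) ∂μ) ^ ((1 : ℝ) / 2) *
            (∫ ω, Real.exp (-θ * S 0 (t - s) ω) ∂μ) ^ ((1 : ℝ) / 2)) := by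
          exact mul_le_mul_of_nonneg_left hCS (Real.exp_pos _).le
      _ = _ := by rw [mul_comm]; congr 2; ring
  calc μ {ω | x < A t ω - A s ω - S s t ω}
      ≤ μ {ω | x ≤ A t ω - A s ω - S s t ω} :=
        measure_mono fun ω (hω : x < _) => le_of_lt hω
    _ ≤ _ := by
        rw [ENNReal.le_ofReal_iff_toReal_le (measure_ne_top μ _)
          (by positivity)]
        exact htarget

/-- Single-node backlog tail bound: if `D(t) ≥ inf_{0≤s≤t}(A(s) + S(s,t))`
pathwise, with stationary arrival increments and stationary service, then for
all `θ > 0` and `x ≥ 0`,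
`P(A(t) - D(t) > x) ≤ [Σ_{u=0}^t E[e^{θA(u)}]^{1/2} E[e^{-θS(u)}]^{1/2}] e^{-θx/2}`. -/
theorem single_node_backlog_bound {Ω : Type*} [MeasurableSpace Ω]
    (μ : Measure Ω) [IsProbabilityMeasure μ]
    (A : ℕ → Ω → ℝ) (S : ℕ → ℕ → Ω → ℝ) (D : ℕ → Ω → ℝ)
    (hAmeas : ∀ u, Measurable (A u)) (hSmeas : ∀ s t, Measurable (S s t))
    (hDmeas : ∀ t, Measurable (D t))
    (hAstat : ∀ s t : ℕ, s ≤ t →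
      IdentDistrib (fun ω => A t ω - A s ω) (A (t - s)) μ μ)
    (hSstat : ∀ s t : ℕ, s ≤ t → IdentDistrib (S s t) (S 0 (t - s)) μ μ)
    (hD : ∀ ω, ∀ t : ℕ, (⨅ s : Fin (t + 1), (A s ω + S s t ω)) ≤ D t ω)
    (hintA : ∀ (θ : ℝ) (u : ℕ), Integrable (fun ω => Real.exp (θ * A u ω)) μ)
    (hintS : ∀ (θ : ℝ) (s t : ℕ), Integrable (fun ω => Real.exp (θ * S s t ω)) μ)
    (t : ℕ) (x θ : ℝ) (hθ : 0 < θ) (hx : 0 ≤ x) :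
    μ {ω | x < A t ω - D t ω} ≤
      ENNReal.ofReal
        ((∑ u ∈ Finset.range (t + 1),
            (∫ ω, Real.exp (θ * A u ω) ∂μ) ^ ((1 : ℝ) / 2) *
              (∫ ω, Real.exp (-θ * S 0 u ω) ∂μ) ^ ((1 : ℝ) / 2)) *
          Real.exp (-θ * x / 2)) := by
  set c : ℕ → ℝ := fun u => (∫ ω, Real.exp (θ * A u ω) ∂μ) ^ ((1 : ℝ) / 2) *
      (∫ ω, Real.exp (-θ * S 0 u ω) ∂μ) ^ ((1 : ℝ) / 2) with hc
  have hcnn : ∀ u, 0 ≤ c u := by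
    intro u
    have h1 : (0:ℝ) ≤ ∫ ω, Real.exp (θ * A u ω) ∂μ :=
      integral_nonneg fun ω => (Real.exp_pos _).le
    have h2 : (0:ℝ) ≤ ∫ ω, Real.exp (-θ * S 0 u ω) ∂μ :=
      integral_nonneg fun ω => (Real.exp_pos _).le
    positivity
  have hsub : {ω | x < A t ω - D t ω} ⊆
      ⋃ s : Fin (t + 1), {ω | x < A t ω - A (s : ℕ) ω - S (s : ℕ) t ω} := by
    intro ω hω
    obtain ⟨i, hi⟩ := exists_eq_ciInf_of_finite
      (f := fun s : Fin (t + 1) => A (s : ℕ) ω + S (s : ℕ) t ω)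
    refine Set.mem_iUnion.2 ⟨i, ?_⟩
    have h1 : A (i : ℕ) ω + S (i : ℕ) t ω ≤ D t ω := hi ▸ hD ω t
    have h2 : x < A t ω - D t ω := hω
    simp only [Set.mem_setOf_eq]
    linarith
  calc μ {ω | x < A t ω - D t ω}
      ≤ μ (⋃ s : Fin (t + 1), {ω | x < A t ω - A (s : ℕ) ω - S (s : ℕ) t ω}) :=
        measure_mono hsub
    _ ≤ ∑' s : Fin (t + 1), μ {ω | x < A t ω - A (s : ℕ) ω - S (s : ℕ) t ω} :=
        measure_iUnion_le _
    _ = ∑ s : Fin (t + 1), μ {ω | x < A t ω - A (s : ℕ) ω - S (s : ℕ) t ω} :=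
        tsum_fintype _
    _ ≤ ∑ s : Fin (t + 1), ENNReal.ofReal (c (t - (s : ℕ)) * Real.exp (-θ * x / 2)) := by
        refine Finset.sum_le_sum fun s _ => ?_
        have hs : (s : ℕ) ≤ t := Nat.lt_succ_iff.mp s.isLt
        exact key_bound μ A S hAmeas hSmeas hAstat hSstat hintA hintS x θ hθ s t hs
    _ = ENNReal.ofReal (∑ s : Fin (t + 1), c (t - (s : ℕ)) * Real.exp (-θ * x / 2)) := by
        rw [ENNReal.ofReal_sum_of_nonneg]
        intro s _
        exact mul_nonneg (hcnn _) (Real.exp_pos _).le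
    _ = ENNReal.ofReal ((∑ u ∈ Finset.range (t + 1), c u) * Real.exp (-θ * x / 2)) := by
        congr 1
        rw [← Finset.sum_mul]
        congr 1
        rw [Fin.sum_univ_eq_sum_range (fun i => c (t - i)) (t + 1)]
        have := Finset.sum_range_reflect c (t + 1)
        simpa using this
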